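/- (Composition of depth-2 types) Let φ be a BE formula, and let I, I' be adjacent intervals (max(I)+1 = min(I')). Let L, L', R, R' be (possibly dummy) depth-1 types such that L ·₁ type1(I) = L' and type1(I') ·₁ R' = R. Then the depth-2 φ-type of I ∪ I' with contexts (L, R') equals (L, R', T ·₁ T', B ∪ B' ∪ B★, E ∪ E' ∪ E★), where (L,R,T,B,E) is the depth-2 φ-type of I with contexts (L,R), (L',R',T',B',E') is the depth-2 φ-type of I' with contexts (L',R'), B★ = {α ∈ Depth1(φ) : L' ⊢ α}, and E★ = {α ∈ Depth1(φ) : R ⊢ α}. -/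
import Mathlib


/-- An interval `[lo, hi]` over the natural numbers. -/
structure Itv where
  lo : ℕ
  hi : ℕ
  le : lo ≤ hi

/-- The singleton interval `[x, x]`. -/
def Itv.sing (x : ℕ) : Itv := ⟨x, x, le_rfl⟩

/-- `J` is a proper prefix of `I`. -/
def isPrefix (J I : Itv) : Prop := J.lo = I.lo ∧ J.hi < I.hi

/-- `J` is a proper suffix of `I`. -/
def isSuffix (J I : Itv) : Prop := J.hi = I.hi ∧ I.lo < J.lo

/-- BE formulas in homogeneous normal form: atoms are `π` and `π ∧ p`. -/
inductive BEpi (Sig : Type) : Type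
  | pi : BEpi Sig
  | atomPi : Sig → BEpi Sig
  | neg : BEpi Sig → BEpi Sig
  | or : BEpi Sig → BEpi Sig → BEpi Sig
  | diaB : BEpi Sig → BEpi Sig
  | diaE : BEpi Sig → BEpi Sig

/-- Satisfaction of a formula in homogeneous normal form at an interval. -/
def satp {Sig : Type} (σ : Itv → Set Sig) : Itv → BEpi Sig → Prop
  | I, .pi => I.lo = I.hi
  | I, .atomPi p => I.lo = I.hi ∧ p ∈ σ I
  | I, .neg φ => ¬ satp σ I φ
  | I, .or φ ψ => satp σ I φ ∨ satp σ I ψ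
  | I, .diaB φ => ∃ J, isPrefix J I ∧ satp σ J φ
  | I, .diaE φ => ∃ J, isSuffix J I ∧ satp σ J φ

/-- Modal depth of a formula (not counting the `π` abbreviation). -/
def dep {Sig : Type} : BEpi Sig → ℕ
  | .pi => 0
  | .atomPi _ => 0
  | .neg φ => dep φ
  | .or φ ψ => max (dep φ) (dep ψ)
  | .diaB φ => dep φ + 1
  | .diaE φ => dep φ + 1

/-- The set of subformulas of a formula. -/
def subf {Sig : Type} : BEpi Sig → Set (BEpi Sig)
  | .pi => {.pi}
  | .atomPi p => {.atomPi p}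
  | .neg φ => insert (.neg φ) (subf φ)
  | .or φ ψ => insert (.or φ ψ) (subf φ ∪ subf ψ)
  | .diaB φ => insert (.diaB φ) (subf φ)
  | .diaE φ => insert (.diaE φ) (subf φ)

/-- Subformulas of `φ` of depth at most 1. -/
def Depth1 {Sig : Type} (φ : BEpi Sig) : Set (BEpi Sig) :=
  {α | α ∈ subf φ ∧ dep α ≤ 1}

/-- Length component of a depth-1 type: one point, two points, or more. -/
inductive Len : Type
  | one | two | more
deriving DecidableEq

/-- A depth-1 type: length component, depth-0 type of the interval, and
depth-0 types of its two endpoint singletons. A depth-0 type is `some s`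
(the labels, standing for `{π} ∪ s`) for singletons and `none` (∅) otherwise. -/
structure T1 (Sig : Type) where
  len : Len
  t : Option (Set Sig)
  b : Option (Set Sig)
  e : Option (Set Sig)

/-- The depth-0 type of an interval. -/
def type0 {Sig : Type} (σ : Itv → Set Sig) (I : Itv) : Option (Set Sig) :=
  if I.lo = I.hi then some (σ I) else none

/-- The depth-1 type of an interval. -/
def type1 {Sig : Type} (σ : Itv → Set Sig) (I : Itv) : T1 Sig :=
  ⟨if I.lo = I.hi then .one else if I.hi = I.lo + 1 then .two else .more,
   type0 σ I, type0 σ (Itv.sing I.lo), type0 σ (Itv.sing I.hi)⟩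

/-- Composition of length components. -/
def Len.comp : Len → Len → Len
  | .one, .one => .two
  | _, _ => .more

/-- Composition of depth-1 types. -/
def T1.comp {Sig : Type} (a b : T1 Sig) : T1 Sig :=
  ⟨a.len.comp b.len, none, a.b, b.e⟩

/-- Depth-1 types extended with the dummy type `none`, and their composition. -/
def ocomp {Sig : Type} : Option (T1 Sig) → Option (T1 Sig) → Option (T1 Sig)
  | none, x => x
  | x, none => x
  | some a, some b => some (a.comp b)

/-- Truth of a depth-0 formula determined by a depth-0 type. -/
def ent0 {Sig : Type} : Option (Set Sig) → BEpi Sig → Prop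
  | t, .pi => t.isSome
  | t, .atomPi p => ∃ s, t = some s ∧ p ∈ s
  | t, .neg φ => ¬ ent0 t φ
  | t, .or φ ψ => ent0 t φ ∨ ent0 t ψ
  | _, .diaB _ => False
  | _, .diaE _ => False

/-- Truth of a depth-(≤1) formula determined by a depth-1 type (`T ⊢ α`). -/
def ent {Sig : Type} (T : T1 Sig) : BEpi Sig → Prop
  | .pi => ent0 T.t .pi
  | .atomPi p => ent0 T.t (.atomPi p)
  | .neg φ => ¬ ent T φ
  | .or φ ψ => ent T φ ∨ ent T ψ
  | .diaB α => match T.len with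
      | .one => False
      | .two => ent0 T.b α
      | .more => ent0 T.b α ∨ ent0 none α
  | .diaE α => match T.len with
      | .one => False
      | .two => ent0 T.e α
      | .more => ent0 T.e α ∨ ent0 none α

/-- `⊢` lifted to possibly-dummy depth-1 types (the dummy entails nothing). -/
def entails {Sig : Type} (o : Option (T1 Sig)) (α : BEpi Sig) : Prop :=
  ∃ T, o = some T ∧ ent T α

/-- A depth-2 `φ`-type with left and right contexts. -/
structure T2 (Sig : Type) where
  L : Option (T1 Sig)
  R : Option (T1 Sig)
  T : T1 Sig
  B : Set (BEpi Sig)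
  E : Set (BEpi Sig)

/-- The depth-2 `φ`-type of an interval `I` with contexts `L`, `R`. -/
def type2 {Sig : Type} (σ : Itv → Set Sig) (φ : BEpi Sig)
    (L R : Option (T1 Sig)) (I : Itv) : T2 Sig :=
  ⟨L, R, type1 σ I,
   {α | α ∈ Depth1 φ ∧ ∃ J, isPrefix J I ∧ entails (ocomp L (some (type1 σ J))) α},
   {α | α ∈ Depth1 φ ∧ ∃ J, isSuffix J I ∧ entails (ocomp (some (type1 σ J)) R) α}⟩

theorem T1.comp_assoc {Sig : Type} (a b c : T1 Sig) :
    (a.comp b).comp c = a.comp (b.comp c) := by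
  have h : ∀ x y z : Len, (x.comp y).comp z = x.comp (y.comp z) := by
    intro x y z; cases x <;> cases y <;> cases z <;> rfl
  unfold T1.comp
  rw [h]

theorem type1_split {Sig : Type} (σ : Itv → Set Sig) (lo m hi : ℕ)
    (h1 : lo ≤ m) (h2 : m + 1 ≤ hi) (hle : lo ≤ hi) :
    type1 σ ⟨lo, hi, hle⟩ = (type1 σ ⟨lo, m, h1⟩).comp (type1 σ ⟨m + 1, hi, h2⟩) := by
  unfold type1 type0 T1.comp
  dsimp only
  congr 1 <;> (split_ifs <;> first | rfl | omega)

theorem ocomp_assoc_left {Sig : Type} (x : Option (T1 Sig)) (a b : T1 Sig) :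
    ocomp x (some (a.comp b)) = ocomp (ocomp x (some a)) (some b) := by
  cases x <;> simp [ocomp, T1.comp_assoc]

theorem ocomp_assoc_right {Sig : Type} (y : Option (T1 Sig)) (a b : T1 Sig) :
    ocomp (some (a.comp b)) y = ocomp (some a) (ocomp (some b) y) := by
  cases y <;> simp [ocomp, T1.comp_assoc]

/-- Composition of depth-2 types: for adjacent intervals `I`, `I'` and
compatible contexts, the depth-2 `φ`-type of `I ∪ I'` with contexts `(L, R')`
is obtained from the types of `I` and `I'` by composing the depth-1 type
components and taking unions of the `B`/`E` components together with the sets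
`B★`, `E★` of depth-≤1 subformulas entailed by `L'` and `R` respectively. -/
theorem depth2_composition {Sig : Type} (σ : Itv → Set Sig) (φ : BEpi Sig)
    (I I' : Itv) (hadj : I.hi + 1 = I'.lo)
    (L L' R R' : Option (T1 Sig))
    (hL : ocomp L (some (type1 σ I)) = L')
    (hR : ocomp (some (type1 σ I')) R' = R) :
    type2 σ φ L R' ⟨I.lo, I'.hi, le_trans I.le (le_trans (by omega) I'.le)⟩ =
      ⟨L, R', (type1 σ I).comp (type1 σ I'),
       (type2 σ φ L R I).B ∪ (type2 σ φ L' R' I').B ∪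
         {α | α ∈ Depth1 φ ∧ entails L' α},
       (type2 σ φ L R I).E ∪ (type2 σ φ L' R' I').E ∪
         {α | α ∈ Depth1 φ ∧ entails R α}⟩ := by
  obtain ⟨a, b, hab⟩ := I
  obtain ⟨c, d, hcd⟩ := I'
  have hbc : b + 1 = c := hadj
  subst hbc
  subst hL
  subst hR
  unfold type2
  simp only [T2.mk.injEq]
  refine ⟨trivial, trivial, type1_split σ a b d hab hcd _, ?_, ?_⟩
  · ext α
    simp only [Set.mem_setOf_eq, Set.mem_union]
    constructor
    · rintro ⟨hα, ⟨jl, jh, jle⟩, ⟨hJlo, hJhi⟩, hent⟩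
      have hl : a = jl := (show jl = a from hJlo).symm
      have hh : jh < d := hJhi
      clear hJlo hJhi
      subst hl
      rcases lt_trichotomy jh b with h | h | h
      · exact Or.inl (Or.inl ⟨hα, ⟨a, jh, jle⟩, ⟨rfl, h⟩, hent⟩)
      · subst h
        exact Or.inr ⟨hα, hent⟩
      · refine Or.inl (Or.inr ⟨hα, ⟨b + 1, jh, h⟩, ⟨rfl, hh⟩, ?_⟩)
        rwa [type1_split σ a b jh hab h jle, ocomp_assoc_left] at hent
    · rintro ((⟨hα, ⟨jl, jh, jle⟩, ⟨hJlo, hJhi⟩, hent⟩ |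
               ⟨hα, ⟨jl, jh, jle⟩, ⟨hJlo, hJhi⟩, hent⟩) | ⟨hα, hent⟩)
      · have hl : a = jl := (show jl = a from hJlo).symm
        have hh : jh < b := hJhi
        clear hJlo hJhi
        subst hl
        exact ⟨hα, ⟨a, jh, jle⟩, ⟨rfl, show jh < d by omega⟩, hent⟩
      · have hl : jl = b + 1 := hJlo
        have hh : jh < d := hJhi
        clear hJlo hJhi
        subst hl
        refine ⟨hα, ⟨a, jh, by omega⟩, ⟨rfl, hh⟩, ?_⟩
        rw [type1_split σ a b jh hab jle (by omega), ocomp_assoc_left]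
        exact hent
      · exact ⟨hα, ⟨a, b, hab⟩, ⟨rfl, show b < d by omega⟩, hent⟩
  · ext α
    simp only [Set.mem_setOf_eq, Set.mem_union]
    constructor
    · rintro ⟨hα, ⟨jl, jh, jle⟩, ⟨hJhi, hJlo⟩, hent⟩
      have hh : d = jh := (show jh = d from hJhi).symm
      have hl : a < jl := hJlo
      clear hJhi hJlo
      subst hh
      rcases lt_trichotomy jl (b + 1) with h | h | h
      · refine Or.inl (Or.inl ⟨hα, ⟨jl, b, by omega⟩, ⟨rfl, hl⟩, ?_⟩)
        rwa [type1_split σ jl b d (by omega) hcd jle, ocomp_assoc_right] at hent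
      · subst h
        exact Or.inr ⟨hα, hent⟩
      · exact Or.inl (Or.inr ⟨hα, ⟨jl, d, jle⟩, ⟨rfl, h⟩, hent⟩)
    · rintro ((⟨hα, ⟨jl, jh, jle⟩, ⟨hJhi, hJlo⟩, hent⟩ |
               ⟨hα, ⟨jl, jh, jle⟩, ⟨hJhi, hJlo⟩, hent⟩) | ⟨hα, hent⟩)
      · have hh : b = jh := (show jh = b from hJhi).symm
        have hl : a < jl := hJlo
        clear hJhi hJlo
        subst hh
        refine ⟨hα, ⟨jl, d, by omega⟩, ⟨rfl, hl⟩, ?_⟩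
        rw [type1_split σ jl b d jle hcd (by omega), ocomp_assoc_right]
        exact hent
      · have hh : d = jh := (show jh = d from hJhi).symm
        have hl : b + 1 < jl := hJlo
        clear hJhi hJlo
        subst hh
        exact ⟨hα, ⟨jl, d, jle⟩, ⟨rfl, show a < jl by omega⟩, hent⟩
      · exact ⟨hα, ⟨b + 1, d, hcd⟩, ⟨rfl, show a < b + 1 by omega⟩, hent⟩
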